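/- Define J(μ,σ) = c·exp(−(μ−μ₀)²/(2s²)) + (μ−μ₀)·erf((μ−μ₀)/√(2s²)) − β·σ, where s² = σ₀² + σ²/P, c = √(2s²/π), σ₀ > 0, P ≥ 2, and β = √(2/(πP(P+1))). Then for fixed σ > 0, the partial derivative of J with respect to μ vanishes if and only if μ = μ₀. -/

import Mathlib

open MeasureTheory

/-- The Gauss error function. -/
noncomputable def erf (x : ℝ) : ℝ :=
  (2 / Real.sqrt Real.pi) * ∫ t in (0:ℝ)..x, Real.exp (-t ^ 2)

lemma erf_hasDerivAt (x : ℝ) :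
    HasDerivAt erf ((2 / Real.sqrt Real.pi) * Real.exp (-x ^ 2)) x := by
  have hcont : Continuous fun t : ℝ => Real.exp (-t ^ 2) := by continuity
  have h : HasDerivAt (fun x : ℝ => ∫ t in (0:ℝ)..x, Real.exp (-t ^ 2))
      (Real.exp (-x ^ 2)) x :=
    intervalIntegral.integral_hasDerivAt_right (hcont.intervalIntegrable _ _)
      (hcont.stronglyMeasurableAtFilter _ _) hcont.continuousAt
  exact h.const_mul (2 / Real.sqrt Real.pi)

lemma erf_strictMono : StrictMono erf := by
  apply strictMono_of_deriv_pos
  intro x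
  rw [(erf_hasDerivAt x).deriv]
  have : 0 < Real.sqrt Real.pi := Real.sqrt_pos.mpr Real.pi_pos
  positivity

lemma erf_zero : erf 0 = 0 := by simp [erf]

lemma erf_eq_zero_iff (x : ℝ) : erf x = 0 ↔ x = 0 := by
  constructor
  · intro h; exact erf_strictMono.injective (by rw [h, erf_zero])
  · rintro rfl; exact erf_zero

theorem stmt5 (μ₀ σ₀ : ℝ) (hσ₀ : 0 < σ₀) (P : ℕ) (hP : 2 ≤ P) :
    ∀ σ > (0:ℝ), ∀ m : ℝ,
      deriv (fun m' : ℝ =>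
          Real.sqrt (2 * (σ₀ ^ 2 + σ ^ 2 / P) / Real.pi)
              * Real.exp (-(m' - μ₀) ^ 2 / (2 * (σ₀ ^ 2 + σ ^ 2 / P)))
            + (m' - μ₀) * erf ((m' - μ₀) / Real.sqrt (2 * (σ₀ ^ 2 + σ ^ 2 / P)))
            - Real.sqrt (2 / (Real.pi * P * (P + 1))) * σ) m = 0
        ↔ m = μ₀ := by
  intro σ hσ m
  have hP0 : (0:ℝ) < P := by positivity
  set s2 : ℝ := σ₀ ^ 2 + σ ^ 2 / P with hs2def
  have hs2 : 0 < s2 := by positivity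
  set k : ℝ := Real.sqrt (2 * s2) with hkdef
  have hkpos : 0 < k := Real.sqrt_pos.mpr (by positivity)
  have hk2 : k ^ 2 = 2 * s2 := Real.sq_sqrt (by positivity)
  have hπ : 0 < Real.sqrt Real.pi := Real.sqrt_pos.mpr Real.pi_pos
  set a : ℝ := m - μ₀ with hadef
  have hc : Real.sqrt (2 * s2 / Real.pi) = k / Real.sqrt Real.pi := by
    rw [Real.sqrt_div (by positivity)]
  -- derivative pieces
  have h1 : HasDerivAt (fun m' : ℝ => m' - μ₀) 1 m := (hasDerivAt_id m).sub_const μ₀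
  have h2 : HasDerivAt (fun m' : ℝ => -(m' - μ₀) ^ 2 / (2 * s2))
      (-(↑2 * a ^ 1 * 1) / (2 * s2)) m := ((h1.pow 2).neg).div_const _
  have h3 : HasDerivAt (fun m' : ℝ =>
      Real.sqrt (2 * s2 / Real.pi) * Real.exp (-(m' - μ₀) ^ 2 / (2 * s2)))
      (Real.sqrt (2 * s2 / Real.pi)
        * (Real.exp (-a ^ 2 / (2 * s2)) * (-(↑2 * a ^ 1 * 1) / (2 * s2)))) m :=
    h2.exp.const_mul _
  have h4 : HasDerivAt (fun m' : ℝ => erf ((m' - μ₀) / k))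
      ((2 / Real.sqrt Real.pi) * Real.exp (-(a / k) ^ 2) * (1 / k)) m := by
    have := (erf_hasDerivAt (a / k)).comp m (h1.div_const k)
    exact this
  have h5 : HasDerivAt (fun m' : ℝ => (m' - μ₀) * erf ((m' - μ₀) / k))
      (1 * erf (a / k) + a * ((2 / Real.sqrt Real.pi) * Real.exp (-(a / k) ^ 2) * (1 / k))) m :=
    h1.mul h4
  have h6 : HasDerivAt (fun m' : ℝ =>
      Real.sqrt (2 * s2 / Real.pi) * Real.exp (-(m' - μ₀) ^ 2 / (2 * s2))
        + (m' - μ₀) * erf ((m' - μ₀) / k)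
        - Real.sqrt (2 / (Real.pi * P * (P + 1))) * σ)
      (Real.sqrt (2 * s2 / Real.pi)
          * (Real.exp (-a ^ 2 / (2 * s2)) * (-(↑2 * a ^ 1 * 1) / (2 * s2)))
        + (1 * erf (a / k) + a * ((2 / Real.sqrt Real.pi) * Real.exp (-(a / k) ^ 2) * (1 / k)))) m :=
    (h3.add h5).sub_const _
  have hexp : -(a / k) ^ 2 = -a ^ 2 / (2 * s2) := by
    rw [div_pow, hk2]; ring
  have hD : Real.sqrt (2 * s2 / Real.pi)
          * (Real.exp (-a ^ 2 / (2 * s2)) * (-(↑2 * a ^ 1 * 1) / (2 * s2)))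
        + (1 * erf (a / k) + a * ((2 / Real.sqrt Real.pi) * Real.exp (-(a / k) ^ 2) * (1 / k)))
      = erf (a / k) := by
    rw [hexp, hc]
    have key : k / s2 = 2 / k := by
      rw [div_eq_div_iff (ne_of_gt hs2) (ne_of_gt hkpos)]
      linear_combination hk2
    set E := Real.exp (-a ^ 2 / (2 * s2)) with hE
    set r := erf (a / k) with hr
    have : k / Real.sqrt Real.pi * (E * (-(↑2 * a ^ 1 * 1) / (2 * s2)))
        + (1 * r + a * (2 / Real.sqrt Real.pi * E * (1 / k)))
        = r + (a * E / Real.sqrt Real.pi) * (2 / k - k / s2) := by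
      have hk' : k ≠ 0 := ne_of_gt hkpos
      have hs2' : s2 ≠ 0 := ne_of_gt hs2
      have hπ' : Real.sqrt Real.pi ≠ 0 := ne_of_gt hπ
      field_simp
      ring
    rw [this, key]
    ring
  rw [h6.deriv, hD, erf_eq_zero_iff, div_eq_zero_iff]
  constructor
  · rintro (h | h)
    · linarith [hadef ▸ h]
    · exact absurd h (ne_of_gt hkpos)
  · intro h; left; rw [hadef, h]; ring
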